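/- Let T : S_n(ℝ) → S_n(ℝ) be a linear transformation such that T(A) is positive definite whenever A is positive definite, and such that for every A ∈ S_n(ℝ), if T(A) is positive definite then A is positive definite. Then rank T(E_ii) = 1 for every i = 1, …, n. -/

import Mathlib

open Matrix

/-- The space `Sₙ(ℝ)` of `n × n` real symmetric matrices, as a submodule of the space of
all `n × n` real matrices. -/
def SymMat (n : ℕ) : Submodule ℝ (Matrix (Fin n) (Fin n) ℝ) where
  carrier := {A | A.IsSymm}
  add_mem' := fun ha hb => ha.add hb
  zero_mem' := by simp [Matrix.IsSymm]
  smul_mem' := fun c _ hA => hA.smul c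

/-- The matrix unit `E_ii`, as an element of `Sₙ(ℝ)`. -/
def symE (n : ℕ) (i : Fin n) : SymMat n :=
  ⟨Matrix.single i i 1,
    Matrix.IsSymm.ext fun a b => by simp [Matrix.single, and_comm]⟩

namespace Stmt9Aux

variable {n : ℕ}

lemma mem_symMat {A : Matrix (Fin n) (Fin n) ℝ} (h : A ∈ SymMat n) : A.IsSymm := h

lemma herm_of_isSymm {A : Matrix (Fin n) (Fin n) ℝ} (h : A.IsSymm) : A.IsHermitian := by
  rw [Matrix.IsHermitian, conjTranspose_eq_transpose_of_trivial]
  exact h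

/-- one as an element of `SymMat n`. -/
def symOne (n : ℕ) : SymMat n := ⟨1, Matrix.isSymm_one⟩

lemma smul_posDef {Q : Matrix (Fin n) (Fin n) ℝ} (hQ : Q.PosDef) {c : ℝ} (hc : 0 < c) :
    (c • Q).PosDef := by
  refine PosDef.of_dotProduct_mulVec_pos ?_ fun x hx => ?_
  · have ht : Qᵀ = Q := by
      rw [← conjTranspose_eq_transpose_of_trivial]; exact hQ.1
    rw [Matrix.IsHermitian, conjTranspose_smul]
    simp [ht, hQ.1.eq]
  · rw [smul_mulVec, dotProduct_smul, smul_eq_mul]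
    exact mul_pos hc (hQ.dotProduct_mulVec_pos hx)

/-- Limit argument: if `A + ε Q` is positive definite for all `ε > 0` and `Q` is positive
definite, then `A` is positive semidefinite. -/
lemma psd_of_perturb {A Q : Matrix (Fin n) (Fin n) ℝ} (hA : A.IsHermitian) (hQ : Q.PosDef)
    (h : ∀ ε : ℝ, 0 < ε → (A + ε • Q).PosDef) : A.PosSemidef := by
  refine PosSemidef.of_dotProduct_mulVec_nonneg hA fun x => ?_
  rw [star_trivial]
  by_contra hneg
  push_neg at hneg
  have hx : x ≠ 0 := by
    rintro rfl
    simp at hneg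
  have hq : 0 < x ⬝ᵥ Q *ᵥ x := by simpa using hQ.dotProduct_mulVec_pos hx
  set ε := -(x ⬝ᵥ A *ᵥ x) / (x ⬝ᵥ Q *ᵥ x) with hε
  have hεpos : 0 < ε := div_pos (neg_pos.2 hneg) hq
  have hkey := (h ε hεpos).dotProduct_mulVec_pos hx
  rw [star_trivial, add_mulVec, smul_mulVec, dotProduct_add, dotProduct_smul,
    smul_eq_mul] at hkey
  have : ε * (x ⬝ᵥ Q *ᵥ x) = -(x ⬝ᵥ A *ᵥ x) := by
    rw [hε, div_mul_cancel₀ _ (ne_of_gt hq)]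
  rw [this] at hkey
  simp at hkey

lemma vecMulVec_mulVec (w v x : Fin n → ℝ) :
    vecMulVec w v *ᵥ x = (v ⬝ᵥ x) • w := by
  funext k
  simp only [mulVec, dotProduct, vecMulVec_apply, Pi.smul_apply, smul_eq_mul]
  rw [Finset.sum_mul]
  exact Finset.sum_congr rfl fun j _ => by ring

lemma posSemidef_vecMulVec (w : Fin n → ℝ) : (vecMulVec w w).PosSemidef := by
  refine PosSemidef.of_dotProduct_mulVec_nonneg (herm_of_isSymm ?_) fun x => ?_
  · show _ᵀ = _
    ext k l
    simp [vecMulVec_apply, mul_comm]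
  · rw [star_trivial, vecMulVec_mulVec, dotProduct_smul, smul_eq_mul, dotProduct_comm]
    exact mul_self_nonneg _

/-- Cauchy–Schwarz for a positive semidefinite matrix. -/
lemma cauchy_schwarz {P : Matrix (Fin n) (Fin n) ℝ} (hP : P.PosSemidef) (x v : Fin n → ℝ) :
    (x ⬝ᵥ P *ᵥ v) ^ 2 ≤ (x ⬝ᵥ P *ᵥ x) * (v ⬝ᵥ P *ᵥ v) := by
  have hsymm : v ⬝ᵥ P *ᵥ x = x ⬝ᵥ P *ᵥ v := by
    have hPt : Pᵀ = P := by
      have := hP.1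
      rwa [Matrix.IsHermitian, conjTranspose_eq_transpose_of_trivial] at this
    rw [dotProduct_mulVec v P x, ← hPt, vecMul_transpose, hPt, dotProduct_comm]
  have key : ∀ t : ℝ, 0 ≤ (v ⬝ᵥ P *ᵥ v) * (t * t) + (2 * (x ⬝ᵥ P *ᵥ v)) * t + x ⬝ᵥ P *ᵥ x := by
    intro t
    have h0 := hP.dotProduct_mulVec_nonneg (x + t • v)
    rw [star_trivial, mulVec_add, mulVec_smul, dotProduct_add, add_dotProduct,
      add_dotProduct, dotProduct_smul, smul_dotProduct, smul_dotProduct,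
      dotProduct_smul] at h0
    simp only [smul_eq_mul] at h0
    rw [hsymm] at h0
    nlinarith [h0]
  have hd := discrim_le_zero key
  rw [discrim] at hd
  nlinarith [hd]

/-- If `A` is PSD and `E_ii - A` is PSD then `A = A i i • E_ii`. -/
lemma eq_smul_std {i : Fin n} {A : Matrix (Fin n) (Fin n) ℝ} (hA : A.PosSemidef)
    (hEA : (Matrix.single i i 1 - A).PosSemidef) :
    A = A i i • Matrix.single i i 1 := by
  have hform : ∀ j : Fin n, Pi.single j 1 ⬝ᵥ A *ᵥ Pi.single j 1 = A j j := by
    intro j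
    rw [mulVec_single, single_dotProduct]
    simp
  have hdiag : ∀ j : Fin n, j ≠ i → A j j = 0 := by
    intro j hj
    have h1 : 0 ≤ A j j := by
      have := hA.dotProduct_mulVec_nonneg (Pi.single j 1)
      rwa [star_trivial, hform] at this
    have h2 : 0 ≤ -(A j j) := by
      have := hEA.dotProduct_mulVec_nonneg (Pi.single j 1)
      rw [star_trivial, sub_mulVec, dotProduct_sub, hform, mulVec_single,
        single_dotProduct] at this
      simpa [Matrix.single, (Ne.symm hj)] using this
    linarith
  have hcol : ∀ j : Fin n, j ≠ i → A *ᵥ Pi.single j 1 = 0 := by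
    intro j hj
    apply (hA.dotProduct_mulVec_zero_iff (Pi.single j 1)).mp
    rw [star_trivial, hform]
    exact hdiag j hj
  have hentry : ∀ k j : Fin n, j ≠ i → A k j = 0 := by
    intro k j hj
    have := congrFun (hcol j hj) k
    rw [mulVec_single] at this
    simpa using this
  have hsymm : ∀ k j : Fin n, A k j = A j k := by
    intro k j
    have := hA.1.apply j k
    rw [star_trivial] at this
    exact this
  ext k l
  by_cases hl : l = i
  · rw [hl]
    by_cases hk : k = i
    · rw [hk]
      simp [Matrix.single]
    · rw [hsymm k i, hentry i k hk]
      simp [Matrix.single, Ne.symm hk]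
  · rw [hentry k l hl]
    simp [Matrix.single, Ne.symm hl]

lemma smul_vecMulVec (a : ℝ) (w v : Fin n → ℝ) :
    a • vecMulVec w v = vecMulVec (a • w) v := by
  ext k l
  simp [vecMulVec_apply, mul_assoc]

lemma rank_vecMulVec_le (w v : Fin n → ℝ) : (vecMulVec w v).rank ≤ 1 := by
  rw [vecMulVec_eq Unit w v]
  calc (replicateCol Unit w * replicateRow Unit v).rank ≤ (replicateRow Unit v).rank := rank_mul_le_right _ _
    _ ≤ Fintype.card Unit := rank_le_card_height _
    _ = 1 := by simp

lemma one_le_rank {A : Matrix (Fin n) (Fin n) ℝ} {v : Fin n → ℝ} (h : A *ᵥ v ≠ 0) :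
    1 ≤ A.rank := by
  rw [Nat.one_le_iff_ne_zero]
  intro h0
  have hbot : LinearMap.range A.mulVecLin = ⊥ := Submodule.finrank_eq_zero.mp h0
  rw [LinearMap.range_eq_bot] at hbot
  exact h (by rw [show A *ᵥ v = A.mulVecLin v from rfl, hbot]; rfl)

end Stmt9Aux

open Stmt9Aux in
/-- Let `T : Sₙ(ℝ) → Sₙ(ℝ)` be linear, such that `T(A)` is positive
definite whenever `A` is positive definite, and such that `T(A)` positive definite implies
`A` positive definite.  Then `rank T(E_ii) = 1` for every `i`. -/
theorem stmt9 (n : ℕ) (T : SymMat n →ₗ[ℝ] SymMat n)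
    (hT : ∀ A : SymMat n, (A : Matrix (Fin n) (Fin n) ℝ).PosDef →
      ((T A : Matrix (Fin n) (Fin n) ℝ)).PosDef)
    (hT' : ∀ A : SymMat n, ((T A : Matrix (Fin n) (Fin n) ℝ)).PosDef →
      (A : Matrix (Fin n) (Fin n) ℝ).PosDef) :
    ∀ i : Fin n, ((T (symE n i) : Matrix (Fin n) (Fin n) ℝ)).rank = 1 := by
  have hone : ((symOne n : SymMat n) : Matrix (Fin n) (Fin n) ℝ).PosDef := Matrix.PosDef.one
  have hQ : ((T (symOne n) : Matrix (Fin n) (Fin n) ℝ)).PosDef := hT _ hone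
  -- forward: T maps PSD to PSD
  have hfwd : ∀ A : SymMat n, (A : Matrix (Fin n) (Fin n) ℝ).PosSemidef →
      ((T A : Matrix (Fin n) (Fin n) ℝ)).PosSemidef := by
    intro A hA
    refine psd_of_perturb (herm_of_isSymm (mem_symMat (T A).2)) hQ fun ε hε => ?_
    have : ((T (A + ε • symOne n) : SymMat n) : Matrix (Fin n) (Fin n) ℝ)
        = (T A : Matrix (Fin n) (Fin n) ℝ) + ε • (T (symOne n) : Matrix (Fin n) (Fin n) ℝ) := by
      rw [map_add, _root_.map_smul]
      rfl
    rw [← this]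
    apply hT
    show ((A : Matrix (Fin n) (Fin n) ℝ) + ε • ((symOne n : SymMat n) : _)).PosDef
    exact Matrix.PosDef.posSemidef_add hA (smul_posDef hone hε)
  -- backward: T⁻¹ maps PSD to PSD
  have hbwd : ∀ A : SymMat n, ((T A : Matrix (Fin n) (Fin n) ℝ)).PosSemidef →
      (A : Matrix (Fin n) (Fin n) ℝ).PosSemidef := by
    intro A hA
    refine psd_of_perturb (herm_of_isSymm (mem_symMat A.2)) Matrix.PosDef.one fun ε hε => ?_
    have hco : ((A + ε • symOne n : SymMat n) : Matrix (Fin n) (Fin n) ℝ)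
        = (A : Matrix (Fin n) (Fin n) ℝ) + ε • (1 : Matrix (Fin n) (Fin n) ℝ) := rfl
    rw [← hco]
    apply hT'
    have : ((T (A + ε • symOne n) : SymMat n) : Matrix (Fin n) (Fin n) ℝ)
        = (T A : Matrix (Fin n) (Fin n) ℝ) + ε • (T (symOne n) : Matrix (Fin n) (Fin n) ℝ) := by
      rw [map_add, _root_.map_smul]
      rfl
    rw [this]
    exact Matrix.PosDef.posSemidef_add hA (smul_posDef hQ hε)
  -- injectivity of T
  have hinj : Function.Injective T := by
    rw [← LinearMap.ker_eq_bot, Submodule.eq_bot_iff]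
    intro A hA0
    rw [LinearMap.mem_ker] at hA0
    have hApsd : (A : Matrix (Fin n) (Fin n) ℝ).PosSemidef := by
      apply hbwd
      rw [hA0]
      exact (by simpa using Matrix.PosSemidef.zero :
        (((0 : SymMat n) : Matrix (Fin n) (Fin n) ℝ)).PosSemidef)
    have hnApsd : (-(A : Matrix (Fin n) (Fin n) ℝ)).PosSemidef := by
      have h0 : T (-A) = 0 := by rw [map_neg, hA0, neg_zero]
      have := hbwd (-A) (by rw [h0]; exact (by simpa using Matrix.PosSemidef.zero :
        (((0 : SymMat n) : Matrix (Fin n) (Fin n) ℝ)).PosSemidef))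
      simpa using this
    have hzero : ∀ x : Fin n → ℝ, (A : Matrix (Fin n) (Fin n) ℝ) *ᵥ x = 0 := by
      intro x
      apply (hApsd.dotProduct_mulVec_zero_iff x).mp
      have h1 := hApsd.dotProduct_mulVec_nonneg x
      have h2 := hnApsd.dotProduct_mulVec_nonneg x
      rw [neg_mulVec, dotProduct_neg] at h2
      linarith
    have : (A : Matrix (Fin n) (Fin n) ℝ) = 0 := by
      ext k j
      have := congrFun (hzero (Pi.single j 1)) k
      rw [mulVec_single] at this
      simpa using this
    exact Subtype.ext this
  have hsurj : Function.Surjective T := LinearMap.injective_iff_surjective.mp hinj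
  intro i
  set P : Matrix (Fin n) (Fin n) ℝ := (T (symE n i) : Matrix (Fin n) (Fin n) ℝ) with hP
  -- P is PSD
  have hEpsd : ((symE n i : SymMat n) : Matrix (Fin n) (Fin n) ℝ).PosSemidef := by
    show (Matrix.single i i 1).PosSemidef
    rw [Matrix.single_eq_single_vecMulVec_single]
    exact posSemidef_vecMulVec _
  have hPpsd : P.PosSemidef := hfwd _ hEpsd
  -- P ≠ 0
  have hPne : P ≠ 0 := by
    intro h0
    have : T (symE n i) = 0 := Subtype.ext h0
    have hE0 : symE n i = 0 := hinj (by rw [this, map_zero])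
    have := congrFun (congrFun (congrArg Subtype.val hE0) i) i
    simp [symE, Matrix.single] at this
  -- find v with P v ≠ 0
  have hv : ∃ v : Fin n → ℝ, P *ᵥ v ≠ 0 := by
    by_contra h
    push_neg at h
    apply hPne
    ext k j
    have := congrFun (h (Pi.single j 1)) k
    rw [mulVec_single] at this
    simpa using this
  obtain ⟨v, hvne⟩ := hv
  set d : ℝ := v ⬝ᵥ P *ᵥ v with hd
  have hdpos : 0 < d := by
    rcases lt_or_eq_of_le (by simpa using hPpsd.dotProduct_mulVec_nonneg v) with h | h
    · exact h
    · exact absurd ((hPpsd.dotProduct_mulVec_zero_iff v).mp (by rw [star_trivial]; exact h.symm))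
        hvne
  set w : Fin n → ℝ := P *ᵥ v with hw
  set B : Matrix (Fin n) (Fin n) ℝ := d⁻¹ • vecMulVec w w with hB
  have hts : (vecMulVec w w)ᵀ = vecMulVec w w := by
    ext k l
    simp [vecMulVec_apply, mul_comm]
  have hBpsd : B.PosSemidef := by
    refine PosSemidef.of_dotProduct_mulVec_nonneg ?_ fun x => ?_
    · rw [Matrix.IsHermitian, conjTranspose_smul]
      simp only [conjTranspose_eq_transpose_of_trivial, hts, star_trivial, hB]
    · rw [star_trivial, hB, smul_mulVec, dotProduct_smul, smul_eq_mul]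
      have := (posSemidef_vecMulVec w).dotProduct_mulVec_nonneg x
      rw [star_trivial] at this
      exact mul_nonneg (inv_nonneg.mpr hdpos.le) this
  have hBform : ∀ x : Fin n → ℝ, x ⬝ᵥ B *ᵥ x = d⁻¹ * (x ⬝ᵥ w) ^ 2 := by
    intro x
    rw [hB, smul_mulVec, dotProduct_smul, smul_eq_mul, Stmt9Aux.vecMulVec_mulVec,
      dotProduct_smul, smul_eq_mul]
    ring_nf
    rw [dotProduct_comm w x]
    ring
  have hPBpsd : (P - B).PosSemidef := by
    refine PosSemidef.of_dotProduct_mulVec_nonneg (hPpsd.1.sub hBpsd.1) fun x => ?_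
    rw [star_trivial, sub_mulVec, dotProduct_sub, hBform, sub_nonneg]
    have hcs := cauchy_schwarz hPpsd x v
    rw [← hw, ← hd] at hcs
    calc d⁻¹ * (x ⬝ᵥ w) ^ 2 ≤ d⁻¹ * ((x ⬝ᵥ P *ᵥ x) * d) := by
          apply mul_le_mul_of_nonneg_left _ (inv_nonneg.mpr hdpos.le)
          exact hcs
      _ = x ⬝ᵥ P *ᵥ x := by field_simp
  -- symmetric, pull back through T
  have hBsymm : B ∈ SymMat n := by
    have := hBpsd.1
    rw [Matrix.IsHermitian, conjTranspose_eq_transpose_of_trivial] at this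
    exact this
  obtain ⟨A₁, hA₁⟩ := hsurj ⟨B, hBsymm⟩
  have hA₁coe : (T A₁ : Matrix (Fin n) (Fin n) ℝ) = B := by rw [hA₁]
  have hA₁psd : (A₁ : Matrix (Fin n) (Fin n) ℝ).PosSemidef := by
    apply hbwd
    rw [hA₁coe]
    exact hBpsd
  have hA₂psd : ((symE n i - A₁ : SymMat n) : Matrix (Fin n) (Fin n) ℝ).PosSemidef := by
    apply hbwd
    have : ((T (symE n i - A₁) : SymMat n) : Matrix (Fin n) (Fin n) ℝ) = P - B := by
      rw [map_sub]
      show (T (symE n i) : Matrix (Fin n) (Fin n) ℝ) - (T A₁ : Matrix (Fin n) (Fin n) ℝ) = P - B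
      rw [hA₁coe, hP]
    rw [this]
    exact hPBpsd
  have hA₂coe : ((symE n i - A₁ : SymMat n) : Matrix (Fin n) (Fin n) ℝ)
      = Matrix.single i i 1 - (A₁ : Matrix (Fin n) (Fin n) ℝ) := rfl
  rw [hA₂coe] at hA₂psd
  -- A₁ is a multiple of E_ii
  set c : ℝ := (A₁ : Matrix (Fin n) (Fin n) ℝ) i i with hc
  have hA₁eq : (A₁ : Matrix (Fin n) (Fin n) ℝ) = c • Matrix.single i i 1 :=
    eq_smul_std hA₁psd hA₂psd
  have hA₁eq' : A₁ = c • symE n i := Subtype.ext hA₁eq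
  have hBcP : B = c • P := by
    rw [← hA₁coe, hA₁eq', _root_.map_smul]
    rfl
  -- B v = P v ≠ 0, hence c ≠ 0
  have hBv : B *ᵥ v = w := by
    rw [hB, smul_mulVec, Stmt9Aux.vecMulVec_mulVec]
    rw [show w ⬝ᵥ v = d by rw [hd, hw, dotProduct_comm]]
    rw [smul_smul, inv_mul_cancel₀ (ne_of_gt hdpos), one_smul]
  have hcne : c ≠ 0 := by
    intro h0
    rw [h0, zero_smul] at hBcP
    rw [hBcP] at hBv
    simp only [zero_mulVec] at hBv
    exact hvne hBv.symm
  -- P is a rank-≤-1 matrix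
  have hPeq : P = vecMulVec ((c⁻¹ * d⁻¹) • w) w := by
    have : P = c⁻¹ • B := by
      rw [hBcP, smul_smul, inv_mul_cancel₀ hcne, one_smul]
    rw [this, hB, smul_smul, Stmt9Aux.smul_vecMulVec]
  have hle : P.rank ≤ 1 := by
    rw [hPeq]
    exact Stmt9Aux.rank_vecMulVec_le _ _
  have hge : 1 ≤ P.rank := one_le_rank hvne
  omega
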